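/- arXiv:2502.00210 — 3 statements merged into one kernel-verified Lean document; each statement's English description precedes it below -/
import Mathlib

section
/- Let Ω ⊆ ℝ² be open, N ∈ ℕ, let φ : Ω → ℝ^N be C², let A, F : Ω → ℝ^N be continuous, and let X^u, X^v : Ω → ℝ be C¹. Suppose ∂_u∂_vφ = r⁻¹ D (∂_vφ − ∂_uφ) + D r⁻² A − D F on Ω, where r = r(u,v) and D = D(r(u,v)). Then at every point of Ω the multiplier identity holds: ∂_v( r² X^u |∂_uφ|² ) + ∂_u( r² X^v |∂_vφ|² ) = r² (∂_v X^u) |∂_uφ|² + r² (∂_u X^v) |∂_vφ|² + 2 r D (X^u − X^v) ⟨∂_uφ, ∂_vφ⟩ + 2 D X^u ⟨A, ∂_uφ⟩ + 2 D X^v ⟨A, ∂_vφ⟩ − 2 r² D ⟨X^u ∂_uφ + X^v ∂_vφ, F⟩, where |·| and ⟨·,·⟩ denote the Euclidean norm and inner product on ℝ^N. -/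
open Real Filter Set
open scoped RealInnerProductSpace

/-- The metric coefficient `D(r) = (1 - M/r)^2` of extremal Reissner–Nordström. -/
noncomputable def Dcoef (M r : ℝ) : ℝ := (1 - M / r) ^ 2

/-- The tortoise coordinate `r_*(r) = r - M - M^2/(r-M) + 2 M log((r-M)/M)`. -/
noncomputable def rstar (M r : ℝ) : ℝ :=
  r - M - M ^ 2 / (r - M) + 2 * M * Real.log ((r - M) / M)

/-- The area-radius function `r(u,v) = R(v - u + c)` in double null coordinates. -/
noncomputable def areaRadius (R : ℝ → ℝ) (c : ℝ) (q : ℝ × ℝ) : ℝ := R (q.2 - q.1 + c)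

/-- Partial derivative in the first (`u`) variable. -/
noncomputable def pdu {E : Type*} [NormedAddCommGroup E] [NormedSpace ℝ E]
    (f : ℝ × ℝ → E) (p : ℝ × ℝ) : E := fderiv ℝ f p (1, 0)

/-- Partial derivative in the second (`v`) variable. -/
noncomputable def pdv {E : Type*} [NormedAddCommGroup E] [NormedSpace ℝ E]
    (f : ℝ × ℝ → E) (p : ℝ × ℝ) : E := fderiv ℝ f p (0, 1)

lemma Dcoef_pos {M r : ℝ} (hM : 0 < M) (hr : M < r) : 0 < Dcoef M r := by
  have hr0 : 0 < r := hM.trans hr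
  have h1 : M / r < 1 := (div_lt_one hr0).2 hr
  exact pow_pos (by linarith) 2

lemma hasDerivAt_rstar {M r : ℝ} (hM : 0 < M) (hr : M < r) :
    HasDerivAt (rstar M) (Dcoef M r)⁻¹ r := by
  have hrM0 : (0:ℝ) < r - M := by linarith
  have hrM : r - M ≠ 0 := hrM0.ne'
  have hr0 : (0:ℝ) < r := hM.trans hr
  have hrne : r ≠ 0 := hr0.ne'
  have hMne : M ≠ 0 := hM.ne'
  have h1 : HasDerivAt (fun x : ℝ => x - M) 1 r := (hasDerivAt_id r).sub_const M
  have h2 : HasDerivAt (fun x : ℝ => M ^ 2 / (x - M))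
      ((0 * (r - M) - M ^ 2 * 1) / (r - M) ^ 2) r :=
    (hasDerivAt_const r (M ^ 2)).div h1 hrM
  have h3 : HasDerivAt (fun x : ℝ => (x - M) / M) (1 / M) r := by
    simpa using h1.div_const M
  have hgne : (r - M) / M ≠ 0 := div_ne_zero hrM hMne
  have h4 : HasDerivAt (fun x : ℝ => Real.log ((x - M) / M)) (((r - M) / M)⁻¹ * (1 / M)) r :=
    by have h5 := (Real.hasDerivAt_log hgne).comp r h3; exact h5
  have H : HasDerivAt (rstar M)
      ((1 - (0 * (r - M) - M ^ 2 * 1) / (r - M) ^ 2) + 2 * M * (((r - M) / M)⁻¹ * (1 / M))) r :=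
    (h1.sub h2).add (h4.const_mul (2 * M))
  have hne : 1 - M / r ≠ 0 := by
    have : M / r < 1 := (div_lt_one hr0).2 hr
    linarith
  have heq : (1 - (0 * (r - M) - M ^ 2 * 1) / (r - M) ^ 2) + 2 * M * (((r - M) / M)⁻¹ * (1 / M))
      = (Dcoef M r)⁻¹ := by
    unfold Dcoef
    field_simp
    ring
  rwa [heq] at H

lemma hasDerivAt_R {M : ℝ} (hM : 0 < M) (R : ℝ → ℝ)
    (hRmem : ∀ s, R s ∈ Set.Ioi M) (hRleft : ∀ s, rstar M (R s) = s)
    (hRright : ∀ ρ ∈ Set.Ioi M, R (rstar M ρ) = ρ) (s : ℝ) :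
    HasDerivAt R (Dcoef M (R s)) s := by
  have hmono : StrictMonoOn (rstar M) (Set.Ioi M) := by
    apply strictMonoOn_of_deriv_pos (convex_Ioi M)
    · exact fun x hx => (hasDerivAt_rstar hM hx).continuousAt.continuousWithinAt
    · intro x hx
      rw [interior_Ioi] at hx
      rw [(hasDerivAt_rstar hM hx).deriv]
      exact inv_pos.2 (Dcoef_pos hM hx)
  have hRmono : StrictMono R := by
    intro a b hab
    refine (hmono.lt_iff_lt (hRmem a) (hRmem b)).mp ?_
    rw [hRleft, hRleft]; exact hab
  have hrange : Set.range R = Set.Ioi M :=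
    Subset.antisymm (range_subset_iff.2 hRmem) (fun ρ hρ => ⟨rstar M ρ, hRright ρ hρ⟩)
  have hcont : ContinuousAt R s := by
    apply (hRmono.strictMonoOn Set.univ).continuousAt_of_image_mem_nhds univ_mem
    rw [image_univ, hrange]
    exact isOpen_Ioi.mem_nhds (hRmem s)
  have hD : 0 < Dcoef M (R s) := Dcoef_pos hM (hRmem s)
  have H := (hasDerivAt_rstar hM (hRmem s)).of_local_left_inverse hcont
      (inv_ne_zero hD.ne') (Eventually.of_forall hRleft)
  simpa [inv_inv] using H

set_option maxHeartbeats 1000000 in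
/-- The general multiplier identity (2.9) for a multiplier `X = Xᵘ∂_u + Xᵛ∂_v`, for solutions of
`∂_u∂_vφ = r⁻¹D(∂_vφ - ∂_uφ) + D r⁻² A - D F` on an open set `Ω ⊆ ℝ²`. -/
theorem stmt6 (M : ℝ) (hM : 0 < M) (c : ℝ) (R : ℝ → ℝ)
    (hRmem : ∀ s, R s ∈ Set.Ioi M)
    (hRleft : ∀ s, rstar M (R s) = s)
    (hRright : ∀ ρ ∈ Set.Ioi M, R (rstar M ρ) = ρ)
    (N : ℕ) (Ω : Set (ℝ × ℝ)) (hΩ : IsOpen Ω)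
    (φ A F : ℝ × ℝ → EuclideanSpace ℝ (Fin N)) (Xu Xv : ℝ × ℝ → ℝ)
    (hφ : ContDiffOn ℝ 2 φ Ω) (hA : ContinuousOn A Ω) (hF : ContinuousOn F Ω)
    (hXu : ContDiffOn ℝ 1 Xu Ω) (hXv : ContDiffOn ℝ 1 Xv Ω)
    (heq : ∀ p ∈ Ω,
      pdu (pdv φ) p =
        (Dcoef M (areaRadius R c p) / areaRadius R c p) • (pdv φ p - pdu φ p) +
          (Dcoef M (areaRadius R c p) / (areaRadius R c p) ^ 2) • A p -
          Dcoef M (areaRadius R c p) • F p) :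
    ∀ p ∈ Ω,
      pdv (fun q => (areaRadius R c q) ^ 2 * Xu q * ‖pdu φ q‖ ^ 2) p +
        pdu (fun q => (areaRadius R c q) ^ 2 * Xv q * ‖pdv φ q‖ ^ 2) p =
      (areaRadius R c p) ^ 2 * pdv Xu p * ‖pdu φ p‖ ^ 2 +
        (areaRadius R c p) ^ 2 * pdu Xv p * ‖pdv φ p‖ ^ 2 +
        2 * areaRadius R c p * Dcoef M (areaRadius R c p) * (Xu p - Xv p) *
          ⟪pdu φ p, pdv φ p⟫ +
        2 * Dcoef M (areaRadius R c p) * Xu p * ⟪A p, pdu φ p⟫ +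
        2 * Dcoef M (areaRadius R c p) * Xv p * ⟪A p, pdv φ p⟫ -
        2 * (areaRadius R c p) ^ 2 * Dcoef M (areaRadius R c p) *
          ⟪Xu p • pdu φ p + Xv p • pdv φ p, F p⟫ := by
  intro p hp
  have hnh : Ω ∈ nhds p := hΩ.mem_nhds hp
  have hR' : ∀ s, HasDerivAt R (Dcoef M (R s)) s := hasDerivAt_R hM R hRmem hRleft hRright
  have hr0M : M < areaRadius R c p := hRmem _
  have hr0pos : (0:ℝ) < areaRadius R c p := hM.trans hr0M
  have hD0pos : 0 < Dcoef M (areaRadius R c p) := Dcoef_pos hM hr0M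
  set r0 : ℝ := areaRadius R c p with hr0def
  set D0 : ℝ := Dcoef M r0 with hD0def
  set lmap : ℝ × ℝ →L[ℝ] ℝ :=
    ContinuousLinearMap.snd ℝ ℝ ℝ - ContinuousLinearMap.fst ℝ ℝ ℝ with hlmapdef
  have hlin : HasFDerivAt (fun q : ℝ × ℝ => q.2 - q.1 + c) lmap p :=
    (((ContinuousLinearMap.snd ℝ ℝ ℝ).hasFDerivAt).sub
      ((ContinuousLinearMap.fst ℝ ℝ ℝ).hasFDerivAt)).add_const c
  have hr' : HasFDerivAt (areaRadius R c) (D0 • lmap) p :=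
    (hR' (p.2 - p.1 + c)).comp_hasFDerivAt p hlin
  have hXu' : HasFDerivAt Xu (fderiv ℝ Xu p) p :=
    ((hXu.differentiableOn one_ne_zero).differentiableAt hnh).hasFDerivAt
  have hXv' : HasFDerivAt Xv (fderiv ℝ Xv p) p :=
    ((hXv.differentiableOn one_ne_zero).differentiableAt hnh).hasFDerivAt
  have hφ1 : ContDiffOn ℝ 1 (fderiv ℝ φ) Ω := hφ.fderiv_of_isOpen hΩ (by norm_num)
  have hf''at : HasFDerivAt (fderiv ℝ φ) (fderiv ℝ (fderiv ℝ φ) p) p :=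
    ((hφ1.differentiableOn one_ne_zero).differentiableAt hnh).hasFDerivAt
  set f'' := fderiv ℝ (fderiv ℝ φ) p with hf''def
  have hsymm : f'' ((0:ℝ),(1:ℝ)) ((1:ℝ),(0:ℝ)) = f'' ((1:ℝ),(0:ℝ)) ((0:ℝ),(1:ℝ)) :=
    (hφ.contDiffAt hnh).isSymmSndFDerivAt (by norm_num) _ _
  set ev1 : ((ℝ × ℝ) →L[ℝ] EuclideanSpace ℝ (Fin N)) →L[ℝ] EuclideanSpace ℝ (Fin N) :=
    ContinuousLinearMap.apply ℝ (EuclideanSpace ℝ (Fin N)) ((1:ℝ), (0:ℝ)) with hev1def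
  set ev2 : ((ℝ × ℝ) →L[ℝ] EuclideanSpace ℝ (Fin N)) →L[ℝ] EuclideanSpace ℝ (Fin N) :=
    ContinuousLinearMap.apply ℝ (EuclideanSpace ℝ (Fin N)) ((0:ℝ), (1:ℝ)) with hev2def
  have ha : HasFDerivAt (pdu φ) (ev1.comp f'') p := ev1.hasFDerivAt.comp p hf''at
  have hb : HasFDerivAt (pdv φ) (ev2.comp f'') p := ev2.hasFDerivAt.comp p hf''at
  set a := pdu φ p with hadef
  set b := pdv φ p with hbdef
  have hmix : pdu (pdv φ) p = f'' (1, 0) (0, 1) := by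
    show fderiv ℝ (pdv φ) p (1, 0) = _
    rw [hb.fderiv]
    rfl
  have hmix' : pdv (pdu φ) p = f'' (0, 1) (1, 0) := by
    show fderiv ℝ (pdu φ) p (0, 1) = _
    rw [ha.fderiv]
    rfl
  have hW : f'' (1, 0) (0, 1)
      = (D0 / r0) • (b - a) + (D0 / r0 ^ 2) • A p - D0 • F p :=
    hmix.symm.trans (heq p hp)
  have hW' : f'' (0, 1) (1, 0)
      = (D0 / r0) • (b - a) + (D0 / r0 ^ 2) • A p - D0 • F p :=
    hsymm.trans hW
  have hiu : HasFDerivAt (fun q => ⟪pdu φ q, pdu φ q⟫)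
      ((fderivInnerCLM ℝ (a, a)).comp ((ev1.comp f'').prod (ev1.comp f''))) p :=
    ha.inner ℝ ha
  have hiv : HasFDerivAt (fun q => ⟪pdv φ q, pdv φ q⟫)
      ((fderivInnerCLM ℝ (b, b)).comp ((ev2.comp f'').prod (ev2.comp f''))) p :=
    hb.inner ℝ hb
  have hfun1 : (fun q => (areaRadius R c q) ^ 2 * Xu q * ‖pdu φ q‖ ^ 2)
      = fun q => areaRadius R c q * areaRadius R c q * Xu q * ⟪pdu φ q, pdu φ q⟫ := by
    funext q
    rw [real_inner_self_eq_norm_sq, sq]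
  have hfun2 : (fun q => (areaRadius R c q) ^ 2 * Xv q * ‖pdv φ q‖ ^ 2)
      = fun q => areaRadius R c q * areaRadius R c q * Xv q * ⟪pdv φ q, pdv φ q⟫ := by
    funext q
    rw [real_inner_self_eq_norm_sq, sq]
  have H1 : HasFDerivAt
      (fun q => areaRadius R c q * areaRadius R c q * Xu q * ⟪pdu φ q, pdu φ q⟫)
      ((r0 * r0 * Xu p) •
          ((fderivInnerCLM ℝ (a, a)).comp ((ev1.comp f'').prod (ev1.comp f''))) +
        ⟪a, a⟫ • ((r0 * r0) • fderiv ℝ Xu p +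
          Xu p • (r0 • (D0 • lmap) + r0 • (D0 • lmap)))) p :=
    ((hr'.mul hr').mul hXu').mul hiu
  have H2 : HasFDerivAt
      (fun q => areaRadius R c q * areaRadius R c q * Xv q * ⟪pdv φ q, pdv φ q⟫)
      ((r0 * r0 * Xv p) •
          ((fderivInnerCLM ℝ (b, b)).comp ((ev2.comp f'').prod (ev2.comp f''))) +
        ⟪b, b⟫ • ((r0 * r0) • fderiv ℝ Xv p +
          Xv p • (r0 • (D0 • lmap) + r0 • (D0 • lmap)))) p :=
    ((hr'.mul hr').mul hXv').mul hiv
  have e1 : pdv (fun q => areaRadius R c q * areaRadius R c q * Xu q * ⟪pdu φ q, pdu φ q⟫) p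
      = (r0 * r0 * Xu p) * (⟪a, f'' (0, 1) (1, 0)⟫ + ⟪f'' (0, 1) (1, 0), a⟫)
        + ⟪a, a⟫ * (r0 * r0 * pdv Xu p + Xu p * (r0 * D0 + r0 * D0)) := by
    show fderiv ℝ _ p ((0:ℝ), (1:ℝ)) = _
    rw [H1.fderiv]
    simp only [hlmapdef, hev1def, hev2def, ContinuousLinearMap.add_apply,
      ContinuousLinearMap.smul_apply, ContinuousLinearMap.comp_apply,
      ContinuousLinearMap.prod_apply, fderivInnerCLM_apply,
      ContinuousLinearMap.sub_apply, ContinuousLinearMap.coe_fst',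
      ContinuousLinearMap.coe_snd', ContinuousLinearMap.apply_apply, smul_eq_mul, pdv]
    ring
  have e2 : pdu (fun q => areaRadius R c q * areaRadius R c q * Xv q * ⟪pdv φ q, pdv φ q⟫) p
      = (r0 * r0 * Xv p) * (⟪b, f'' (1, 0) (0, 1)⟫ + ⟪f'' (1, 0) (0, 1), b⟫)
        + ⟪b, b⟫ * (r0 * r0 * pdu Xv p - Xv p * (r0 * D0 + r0 * D0)) := by
    show fderiv ℝ _ p ((1:ℝ), (0:ℝ)) = _
    rw [H2.fderiv]
    simp only [hlmapdef, hev1def, hev2def, ContinuousLinearMap.add_apply,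
      ContinuousLinearMap.smul_apply, ContinuousLinearMap.comp_apply,
      ContinuousLinearMap.prod_apply, fderivInnerCLM_apply,
      ContinuousLinearMap.sub_apply, ContinuousLinearMap.coe_fst',
      ContinuousLinearMap.coe_snd', ContinuousLinearMap.apply_apply, smul_eq_mul, pdu]
    ring
  rw [hfun1, hfun2, e1, e2, hW, hW']
  have c1 : ⟪b, a⟫ = ⟪a, b⟫ := real_inner_comm _ _
  have c2 : ⟪A p, a⟫ = ⟪a, A p⟫ := real_inner_comm _ _
  have c3 : ⟪A p, b⟫ = ⟪b, A p⟫ := real_inner_comm _ _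
  have c4 : ⟪F p, a⟫ = ⟪a, F p⟫ := real_inner_comm _ _
  have c5 : ⟪F p, b⟫ = ⟪b, F p⟫ := real_inner_comm _ _
  simp only [inner_add_left, inner_add_right, inner_sub_left, inner_sub_right,
    real_inner_smul_left, real_inner_smul_right, ← real_inner_self_eq_norm_sq,
    c1, c2, c3, c4, c5]
  have hr0ne : r0 ≠ 0 := hr0pos.ne'
  field_simp
  ring
end

section
/- Let Λ > 0. There exists a constant C > 0, depending only on Λ, such that for every p ∈ [−1, 1) and every C¹ function φ : [Λ, ∞) → ℝ with lim inf_{r→∞} r^{p−1} (r·φ(r))² = 0, writing ψ(r) := r·φ(r), one has (1 − p)² · ∫_Λ^∞ r^p φ(r)² dr ≤ C · ( ∫_Λ^∞ r^p ψ'(r)² dr + ∫_Λ^{2Λ} φ(r)² dr ), where the inequality is understood in [0, ∞]. -/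
open Real Filter Set MeasureTheory

set_option maxHeartbeats 1000000 in
/-- Far-region `r^p`-weighted Hardy inequality (one-dimensional form of Lemma 4.2, first
inequality): for `p ∈ [-1, 1)`, `φ` C¹ on `[Λ, ∞)` with
`liminf_{r→∞} r^{p-1}(rφ(r))² = 0`, and `ψ = rφ`,
`(1-p)² ∫_Λ^∞ r^p φ² dr ≤ C (∫_Λ^∞ r^p (ψ')² dr + ∫_Λ^{2Λ} φ² dr)`. -/
theorem stmt8 (Λ : ℝ) (hΛ : 0 < Λ) :
    ∃ C : ℝ, 0 < C ∧ ∀ p : ℝ, p ∈ Set.Ico (-1 : ℝ) 1 →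
      ∀ φ : ℝ → ℝ, ContDiffOn ℝ 1 φ (Set.Ici Λ) →
        Filter.liminf (fun r : ℝ => r ^ (p - 1) * (r * φ r) ^ 2) Filter.atTop = 0 →
        ENNReal.ofReal ((1 - p) ^ 2) *
            ∫⁻ r in Set.Ioi Λ, ENNReal.ofReal (r ^ p * (φ r) ^ 2) ≤
          ENNReal.ofReal C *
            ((∫⁻ r in Set.Ioi Λ,
                ENNReal.ofReal (r ^ p * (deriv (fun ρ => ρ * φ ρ) r) ^ 2)) +
              ∫⁻ r in Set.Ioc Λ (2 * Λ), ENNReal.ofReal ((φ r) ^ 2)) := by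
  have hK0 : (0:ℝ) < max 1 (Λ ^ (-2 : ℝ)) := lt_of_lt_of_le one_pos (le_max_left _ _)
  have hc0 : (0:ℝ) < max 1 (max Λ⁻¹ (2*Λ)) := lt_of_lt_of_le one_pos (le_max_left _ _)
  set K : ℝ := max 1 (Λ ^ (-2 : ℝ)) with hKdef
  set c : ℝ := max 1 (max Λ⁻¹ (2*Λ)) with hcdef
  have hCpos : (0:ℝ) < 16*K*Λ*(1+Λ) + 4*K*c + 4 := by
    nlinarith [mul_pos (mul_pos (mul_pos (by norm_num : (0:ℝ) < 16) hK0) hΛ)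
        (by linarith : (0:ℝ) < 1+Λ),
      mul_pos (mul_pos (by norm_num : (0:ℝ) < 4) hK0) hc0]
  refine ⟨_, hCpos, ?_⟩
  intro p hp φ hφ _
  obtain ⟨hp1, hp2⟩ := hp
  have h1p : (0:ℝ) < 1 - p := by linarith
  have hΛ2 : Λ ≤ 2 * Λ := by linarith
  set ψ : ℝ → ℝ := fun ρ => ρ * φ ρ with hψdef
  have hφc : ContinuousOn φ (Ici Λ) := hφ.continuousOn
  set φ' : ℝ → ℝ := derivWithin φ (Ici Λ) with hφ'def
  have hφ'c : ContinuousOn φ' (Ici Λ) :=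
    hφ.continuousOn_derivWithin (uniqueDiffOn_Ici Λ) le_rfl
  set g : ℝ → ℝ := fun r => φ r + r * φ' r with hgdef
  have hgc : ContinuousOn g (Ici Λ) := hφc.add (continuousOn_id.mul hφ'c)
  have hψc : ContinuousOn ψ (Ici Λ) := continuousOn_id.mul hφc
  have hψd : ∀ r, Λ < r → HasDerivAt ψ (g r) r := by
    intro r hr
    have hmem : Ici Λ ∈ nhds r := Ici_mem_nhds hr
    have hdφ : DifferentiableAt ℝ φ r :=
      ((hφ.differentiableOn one_ne_zero) r (le_of_lt hr)).differentiableAt hmem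
    have h1 : HasDerivAt φ (φ' r) r := by
      have h2 := hdφ.hasDerivAt
      rw [hφ'def, derivWithin_of_mem_nhds hmem]
      exact h2
    have h3 := (hasDerivAt_id' r).mul h1
    have h4 : HasDerivAt ψ (1 * φ r + r * φ' r) r := h3
    simpa [hgdef] using h4
  have hderiv_eq : ∀ r, Λ < r → deriv ψ r = g r := fun r hr => (hψd r hr).deriv
  have hrpowc : ∀ q : ℝ, ContinuousOn (fun r : ℝ => r ^ q) (Ici Λ) := fun q =>
    ContinuousOn.rpow_const continuousOn_id
      (fun r hr => Or.inl (ne_of_gt (lt_of_lt_of_le hΛ hr)))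
  -- FTC for the main multiplier identity
  have hFTC : ∀ R, Λ ≤ R →
      ∫ r in Λ..R, ((p-1) * r ^ (p-2) * (ψ r)^2 + r ^ (p-1) * (2 * ψ r * g r))
        = R ^ (p-1) * (ψ R)^2 - Λ ^ (p-1) * (ψ Λ)^2 := by
    intro R hR
    have hFc : ContinuousOn (fun r : ℝ => r ^ (p-1) * (ψ r)^2) (Icc Λ R) :=
      ((hrpowc (p-1)).mul (hψc.pow 2)).mono Icc_subset_Ici_self
    have hF'c : ContinuousOn
        (fun r : ℝ => (p-1) * r ^ (p-2) * (ψ r)^2 + r ^ (p-1) * (2 * ψ r * g r))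
        (Ici Λ) :=
      ((continuousOn_const.mul (hrpowc (p-2))).mul (hψc.pow 2)).add
        ((hrpowc (p-1)).mul ((continuousOn_const.mul hψc).mul hgc))
    apply intervalIntegral.integral_eq_sub_of_hasDeriv_right_of_le hR hFc ?_ ?_
    · intro x hx
      have hx0 : (0:ℝ) < x := lt_trans hΛ hx.1
      have h1 : HasDerivAt (fun r : ℝ => r ^ (p-1)) ((p-1) * x ^ (p-1-1)) x :=
        Real.hasDerivAt_rpow_const (Or.inl (ne_of_gt hx0))
      have h3 := h1.mul ((hψd x hx.1).pow 2)
      have heq : (p-1) * x ^ (p-1-1) * (ψ x)^2 + x ^ (p-1) * (↑2 * ψ x ^ (2-1) * g x)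
          = (p-1) * x ^ (p-2) * (ψ x)^2 + x ^ (p-1) * (2 * ψ x * g x) := by
        rw [show p-1-1 = p-2 by ring]; push_cast; ring
      rw [← heq]
      exact h3.hasDerivWithinAt
    · exact (hF'c.mono (by rw [uIcc_of_le hR]; exact Icc_subset_Ici_self)).intervalIntegrable
  -- main per-R estimate (real)
  have hmain : ∀ R, Λ ≤ R →
      (1-p)^2 * ∫ r in Λ..R, r ^ p * (φ r)^2
        ≤ 2*(1-p) * (Λ ^ (p-1) * (ψ Λ)^2) + 4 * ∫ r in Λ..R, r ^ p * (g r)^2 := by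
    intro R hR
    have hsub : Icc Λ R ⊆ Ici Λ := Icc_subset_Ici_self
    have huIcc : uIcc Λ R = Icc Λ R := uIcc_of_le hR
    have hiφ2 : IntervalIntegrable (fun r : ℝ => r ^ p * (φ r)^2) volume Λ R := by
      apply ContinuousOn.intervalIntegrable
      rw [huIcc]; exact (((hrpowc p).mul (hφc.pow 2)).mono hsub)
    have hig2 : IntervalIntegrable (fun r : ℝ => r ^ p * (g r)^2) volume Λ R := by
      apply ContinuousOn.intervalIntegrable
      rw [huIcc]; exact (((hrpowc p).mul (hgc.pow 2)).mono hsub)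
    have hiF' : IntervalIntegrable
        (fun r : ℝ => (p-1) * r ^ (p-2) * (ψ r)^2 + r ^ (p-1) * (2 * ψ r * g r)) volume Λ R := by
      apply ContinuousOn.intervalIntegrable
      rw [huIcc]
      exact ((((continuousOn_const.mul (hrpowc (p-2))).mul (hψc.pow 2)).add
        ((hrpowc (p-1)).mul ((continuousOn_const.mul hψc).mul hgc))).mono hsub)
    have hpt : ∀ r ∈ Icc Λ R, (1-p)^2 * (r ^ p * (φ r)^2)
        ≤ (-2*(1-p)) * ((p-1) * r ^ (p-2) * (ψ r)^2 + r ^ (p-1) * (2 * ψ r * g r))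
          + 4 * (r ^ p * (g r)^2) := by
      intro r hr
      have hr0 : (0:ℝ) < r := lt_of_lt_of_le hΛ hr.1
      have huv : r ^ (p-2) * r ^ p = (r ^ (p-1)) * (r ^ (p-1)) := by
        rw [← Real.rpow_add hr0, ← Real.rpow_add hr0]; congr 1; ring
      have hva : r ^ (p-2) * (ψ r)^2 = r ^ p * (φ r)^2 := by
        have h22 : r ^ ((2:ℕ):ℝ) = r ^ (2:ℕ) := Real.rpow_natCast r 2
        calc r ^ (p-2) * (ψ r)^2 = r ^ (p-2) * (r ^ (2:ℕ) * (φ r)^2) := by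
              simp only [hψdef]; ring
          _ = (r ^ (p-2) * r ^ ((2:ℕ):ℝ)) * (φ r)^2 := by rw [h22]; ring
          _ = r ^ p * (φ r)^2 := by rw [← Real.rpow_add hr0]; congr 1; push_cast; ring
      have hv : (0:ℝ) < r ^ p := Real.rpow_pos_of_pos hr0 p
      have hu : (0:ℝ) ≤ r ^ (p-2) := (Real.rpow_pos_of_pos hr0 _).le
      rw [← hva]
      nlinarith [sq_nonneg ((1-p) * r^(p-1) * ψ r - 2 * r^p * g r), hv, huv, h1p,
        sq_nonneg ((1-p) * ψ r), sq_nonneg (ψ r), sq_nonneg (g r), mul_pos hv hv]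
    have hmono := intervalIntegral.integral_mono_on hR
      (hiφ2.const_mul ((1-p)^2)) ((hiF'.const_mul (-2*(1-p))).add (hig2.const_mul 4)) hpt
    have hXnn : (0:ℝ) ≤ R ^ (p-1) * (ψ R)^2 :=
      mul_nonneg (Real.rpow_nonneg (le_trans hΛ.le hR) _) (sq_nonneg _)
    calc (1-p)^2 * ∫ r in Λ..R, r ^ p * (φ r)^2
        = ∫ r in Λ..R, (1-p)^2 * (r ^ p * (φ r)^2) :=
          (intervalIntegral.integral_const_mul _ _).symm
      _ ≤ ∫ r in Λ..R, ((-2*(1-p)) * ((p-1) * r ^ (p-2) * (ψ r)^2 + r ^ (p-1) * (2 * ψ r * g r))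
          + 4 * (r ^ p * (g r)^2)) := hmono
      _ = (-2*(1-p)) * (∫ r in Λ..R, ((p-1) * r ^ (p-2) * (ψ r)^2 + r ^ (p-1) * (2 * ψ r * g r)))
          + 4 * ∫ r in Λ..R, r ^ p * (g r)^2 := by
          rw [intervalIntegral.integral_add (hiF'.const_mul _) (hig2.const_mul _),
            intervalIntegral.integral_const_mul, intervalIntegral.integral_const_mul]
      _ = (-2*(1-p)) * (R ^ (p-1) * (ψ R)^2 - Λ ^ (p-1) * (ψ Λ)^2)
          + 4 * ∫ r in Λ..R, r ^ p * (g r)^2 := by rw [hFTC R hR]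
      _ ≤ 2*(1-p) * (Λ ^ (p-1) * (ψ Λ)^2) + 4 * ∫ r in Λ..R, r ^ p * (g r)^2 := by
          nlinarith [mul_nonneg h1p.le hXnn]
  -- boundary FTC on [Λ, 2Λ]
  have hW : ∫ r in Λ..(2*Λ), (-(ψ r)^2 + (2*Λ - r) * (2 * ψ r * g r))
      = (2*Λ - 2*Λ) * (ψ (2*Λ))^2 - (2*Λ - Λ) * (ψ Λ)^2 := by
    have hWc : ContinuousOn (fun r : ℝ => (2*Λ - r) * (ψ r)^2) (Icc Λ (2*Λ)) :=
      ((continuousOn_const.sub continuousOn_id).mul (hψc.pow 2)).mono Icc_subset_Ici_self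
    have hW'c : ContinuousOn (fun r : ℝ => -(ψ r)^2 + (2*Λ - r) * (2 * ψ r * g r)) (Ici Λ) :=
      ((hψc.pow 2).neg).add ((continuousOn_const.sub continuousOn_id).mul
        ((continuousOn_const.mul hψc).mul hgc))
    apply intervalIntegral.integral_eq_sub_of_hasDeriv_right_of_le hΛ2 hWc ?_ ?_
    · intro x hx
      have h1 : HasDerivAt (fun r : ℝ => 2*Λ - r) (-1) x := by
        simpa using (hasDerivAt_id x).const_sub (2*Λ)
      have h3 := h1.mul ((hψd x hx.1).pow 2)
      have heq : (-1) * (ψ x)^2 + (2*Λ - x) * (↑2 * ψ x ^ (2-1) * g x)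
          = -(ψ x)^2 + (2*Λ - x) * (2 * ψ x * g x) := by push_cast; ring
      rw [← heq]
      exact h3.hasDerivWithinAt
    · exact (hW'c.mono (by rw [uIcc_of_le hΛ2]; exact Icc_subset_Ici_self)).intervalIntegrable
  have hiW' : IntervalIntegrable (fun r : ℝ => -(ψ r)^2 + (2*Λ - r) * (2 * ψ r * g r))
      volume Λ (2*Λ) := by
    apply ContinuousOn.intervalIntegrable
    rw [uIcc_of_le hΛ2]
    exact (((hψc.pow 2).neg).add ((continuousOn_const.sub continuousOn_id).mul
      ((continuousOn_const.mul hψc).mul hgc))).mono Icc_subset_Ici_self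
  have hiφ2b : IntervalIntegrable (fun r : ℝ => (φ r)^2) volume Λ (2*Λ) := by
    apply ContinuousOn.intervalIntegrable
    rw [uIcc_of_le hΛ2]; exact (hφc.pow 2).mono Icc_subset_Ici_self
  have hig2b : IntervalIntegrable (fun r : ℝ => (g r)^2) volume Λ (2*Λ) := by
    apply ContinuousOn.intervalIntegrable
    rw [uIcc_of_le hΛ2]; exact (hgc.pow 2).mono Icc_subset_Ici_self
  have hiwg2b : IntervalIntegrable (fun r : ℝ => r ^ p * (g r)^2) volume Λ (2*Λ) := by
    apply ContinuousOn.intervalIntegrable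
    rw [uIcc_of_le hΛ2]; exact ((hrpowc p).mul (hgc.pow 2)).mono Icc_subset_Ici_self
  have hbdry : Λ * (ψ Λ)^2 ≤ (4*Λ^2*(1+Λ)) * (∫ r in Λ..(2*Λ), (φ r)^2)
      + Λ * ∫ r in Λ..(2*Λ), (g r)^2 := by
    have hpt : ∀ r ∈ Icc Λ (2*Λ),
        -(-(ψ r)^2 + (2*Λ - r) * (2 * ψ r * g r))
          ≤ (4*Λ^2*(1+Λ)) * (φ r)^2 + Λ * (g r)^2 := by
      intro r hr
      have hr0 : (0:ℝ) < r := lt_of_lt_of_le hΛ hr.1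
      have hψr : ψ r = r * φ r := rfl
      have ha : (ψ r)^2 ≤ 4*Λ^2*(φ r)^2 := by
        rw [hψr]
        nlinarith [mul_nonneg (mul_nonneg (by linarith [hr.2] : (0:ℝ) ≤ 2*Λ - r)
          (by linarith [hr.1] : (0:ℝ) ≤ 2*Λ + r)) (sq_nonneg (φ r))]
      have hb : -((2*Λ - r) * (2 * ψ r * g r)) ≤ Λ * ((ψ r)^2 + (g r)^2) := by
        nlinarith [mul_nonneg (by linarith [hr.2] : (0:ℝ) ≤ 2*Λ - r) (sq_nonneg (ψ r + g r)),
          mul_nonneg (by linarith [hr.1] : (0:ℝ) ≤ Λ - (2*Λ - r)) (sq_nonneg (ψ r)),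
          mul_nonneg (by linarith [hr.1] : (0:ℝ) ≤ Λ - (2*Λ - r)) (sq_nonneg (g r))]
      nlinarith [mul_le_mul_of_nonneg_left ha (by linarith : (0:ℝ) ≤ 1 + Λ)]
    have hiW'neg : IntervalIntegrable
        (fun r : ℝ => -(-(ψ r)^2 + (2*Λ - r) * (2 * ψ r * g r))) volume Λ (2*Λ) := hiW'.neg
    have hmono := intervalIntegral.integral_mono_on hΛ2 hiW'neg
      ((hiφ2b.const_mul (4*Λ^2*(1+Λ))).add (hig2b.const_mul Λ)) hpt
    have e1 : ∫ r in Λ..(2*Λ), -(-(ψ r)^2 + (2*Λ - r) * (2 * ψ r * g r))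
        = Λ * (ψ Λ)^2 := by
      rw [intervalIntegral.integral_neg, hW]; ring
    have e2 : ∫ r in Λ..(2*Λ), ((4*Λ^2*(1+Λ)) * (φ r)^2 + Λ * (g r)^2)
        = (4*Λ^2*(1+Λ)) * (∫ r in Λ..(2*Λ), (φ r)^2) + Λ * ∫ r in Λ..(2*Λ), (g r)^2 := by
      rw [intervalIntegral.integral_add (hiφ2b.const_mul _) (hig2b.const_mul _),
        intervalIntegral.integral_const_mul, intervalIntegral.integral_const_mul]
    rw [e1, e2] at hmono
    exact hmono
  -- ∫ g² ≤ c ∫ r^p g² on [Λ, 2Λ]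
  have hg2c : (∫ r in Λ..(2*Λ), (g r)^2) ≤ c * ∫ r in Λ..(2*Λ), r ^ p * (g r)^2 := by
    have hpt : ∀ r ∈ Icc Λ (2*Λ), (g r)^2 ≤ c * (r ^ p * (g r)^2) := by
      intro r hr
      have hr0 : (0:ℝ) < r := lt_of_lt_of_le hΛ hr.1
      have hrp : (0:ℝ) < r ^ p := Real.rpow_pos_of_pos hr0 p
      have hrc : r ^ (-p) ≤ c := by
        rcases le_total 1 r with h | h
        · calc r ^ (-p) ≤ r ^ (1:ℝ) :=
                Real.rpow_le_rpow_of_exponent_le h (by linarith)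
            _ = r := Real.rpow_one r
            _ ≤ 2*Λ := hr.2
            _ ≤ c := le_trans (le_max_right _ _) (le_max_right _ _)
        · calc r ^ (-p) ≤ r ^ (-1:ℝ) :=
                Real.rpow_le_rpow_of_exponent_ge hr0 h (by linarith)
            _ = r⁻¹ := Real.rpow_neg_one r
            _ ≤ Λ⁻¹ := by
                exact inv_anti₀ hΛ hr.1
            _ ≤ c := le_trans (le_max_left _ _) (le_max_right _ _)
      have h1 : 1 ≤ c * r ^ p := by
        have h2 : (r ^ p)⁻¹ ≤ c := by rwa [← Real.rpow_neg hr0.le]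
        calc (1:ℝ) = (r ^ p)⁻¹ * r ^ p := (inv_mul_cancel₀ hrp.ne').symm
          _ ≤ c * r ^ p := mul_le_mul_of_nonneg_right h2 hrp.le
      calc (g r)^2 = 1 * (g r)^2 := (one_mul _).symm
        _ ≤ (c * r ^ p) * (g r)^2 := mul_le_mul_of_nonneg_right h1 (sq_nonneg _)
        _ = c * (r ^ p * (g r)^2) := by ring
    have := intervalIntegral.integral_mono_on hΛ2 hig2b (hiwg2b.const_mul c) hpt
    rwa [intervalIntegral.integral_const_mul] at this
  have hIφ2nn : (0:ℝ) ≤ ∫ r in Λ..(2*Λ), (φ r)^2 :=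
    intervalIntegral.integral_nonneg hΛ2 (fun _ _ => sq_nonneg _)
  have hIwg2nn : (0:ℝ) ≤ ∫ r in Λ..(2*Λ), r ^ p * (g r)^2 :=
    intervalIntegral.integral_nonneg hΛ2 (fun u hu =>
      mul_nonneg (Real.rpow_nonneg (le_trans hΛ.le hu.1) _) (sq_nonneg _))
  have hψΛsq : (ψ Λ)^2 ≤ 4*Λ*(1+Λ) * (∫ r in Λ..(2*Λ), (φ r)^2)
      + c * ∫ r in Λ..(2*Λ), r ^ p * (g r)^2 := by
    have h1 : Λ * (ψ Λ)^2 ≤ Λ * (4*Λ*(1+Λ) * (∫ r in Λ..(2*Λ), (φ r)^2)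
        + c * ∫ r in Λ..(2*Λ), r ^ p * (g r)^2) := by
      calc Λ * (ψ Λ)^2 ≤ (4*Λ^2*(1+Λ)) * (∫ r in Λ..(2*Λ), (φ r)^2)
            + Λ * ∫ r in Λ..(2*Λ), (g r)^2 := hbdry
        _ ≤ (4*Λ^2*(1+Λ)) * (∫ r in Λ..(2*Λ), (φ r)^2)
            + Λ * (c * ∫ r in Λ..(2*Λ), r ^ p * (g r)^2) := by
            have := mul_le_mul_of_nonneg_left hg2c hΛ.le
            linarith
        _ = Λ * (4*Λ*(1+Λ) * (∫ r in Λ..(2*Λ), (φ r)^2)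
            + c * ∫ r in Λ..(2*Λ), r ^ p * (g r)^2) := by ring
    exact le_of_mul_le_mul_left h1 hΛ
  have hΛK : Λ ^ (p-1) ≤ K := by
    rcases le_total 1 Λ with h | h
    · exact le_trans (Real.rpow_le_one_of_one_le_of_nonpos h (by linarith)) (le_max_left _ _)
    · exact le_trans (Real.rpow_le_rpow_of_exponent_ge hΛ h (by linarith)) (le_max_right _ _)
  -- combined real estimate
  have hreal : ∀ R, Λ ≤ R →
      (1-p)^2 * (∫ r in Λ..R, r ^ p * (φ r)^2)
        ≤ 16*K*Λ*(1+Λ) * (∫ r in Λ..(2*Λ), (φ r)^2)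
          + (4*K*c * (∫ r in Λ..(2*Λ), r ^ p * (g r)^2)
            + 4 * ∫ r in Λ..R, r ^ p * (g r)^2) := by
    intro R hR
    have h1 := hmain R hR
    have h2 : 2*(1-p) * (Λ ^ (p-1) * (ψ Λ)^2) ≤ 4 * (K * (ψ Λ)^2) := by
      have hb1 : Λ ^ (p-1) * (ψ Λ)^2 ≤ K * (ψ Λ)^2 :=
        mul_le_mul_of_nonneg_right hΛK (sq_nonneg _)
      have hnn : (0:ℝ) ≤ Λ ^ (p-1) * (ψ Λ)^2 :=
        mul_nonneg (Real.rpow_nonneg hΛ.le _) (sq_nonneg _)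
      have h4 : 2*(1-p) ≤ 4 := by linarith
      exact mul_le_mul h4 hb1 hnn (by norm_num)
    have h3 : K * (ψ Λ)^2 ≤ K * (4*Λ*(1+Λ) * (∫ r in Λ..(2*Λ), (φ r)^2)
        + c * ∫ r in Λ..(2*Λ), r ^ p * (g r)^2) :=
      mul_le_mul_of_nonneg_left hψΛsq hK0.le
    linarith [h1, h2, h3]
  -- conversion between lintegrals and interval integrals
  have hIoc_eq : ∀ (f : ℝ → ℝ) (R : ℝ), Λ ≤ R → ContinuousOn f (Icc Λ R) →
      (∀ r ∈ Ioc Λ R, 0 ≤ f r) →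
      ∫⁻ r in Ioc Λ R, ENNReal.ofReal (f r) = ENNReal.ofReal (∫ r in Λ..R, f r) := by
    intro f R hR hfc hf0
    rw [intervalIntegral.integral_of_le hR]
    rw [MeasureTheory.ofReal_integral_eq_lintegral_ofReal
      ((hfc.integrableOn_Icc).mono_set Ioc_subset_Icc_self)
      ((ae_restrict_iff' measurableSet_Ioc).mpr (ae_of_all _ hf0))]
  have hcφ2 : ∀ R, Λ ≤ R → ContinuousOn (fun r : ℝ => r ^ p * (φ r)^2) (Icc Λ R) :=
    fun R hR => ((hrpowc p).mul (hφc.pow 2)).mono Icc_subset_Ici_self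
  have hcg2 : ∀ R, Λ ≤ R → ContinuousOn (fun r : ℝ => r ^ p * (g r)^2) (Icc Λ R) :=
    fun R hR => ((hrpowc p).mul (hgc.pow 2)).mono Icc_subset_Ici_self
  have hnnφ2 : ∀ r ∈ Ioi Λ, (0:ℝ) ≤ r ^ p * (φ r)^2 := fun r hr =>
    mul_nonneg (Real.rpow_nonneg (le_trans hΛ.le (le_of_lt hr)) _) (sq_nonneg _)
  have hnng2 : ∀ r ∈ Ioi Λ, (0:ℝ) ≤ r ^ p * (g r)^2 := fun r hr =>
    mul_nonneg (Real.rpow_nonneg (le_trans hΛ.le (le_of_lt hr)) _) (sq_nonneg _)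
  -- monotone convergence for the LHS
  have hlim : ∫⁻ r in Ioi Λ, ENNReal.ofReal (r ^ p * (φ r)^2)
      = ⨆ n : ℕ, (∫⁻ r in Ioc Λ (Λ + (n:ℝ)), ENNReal.ofReal (r ^ p * (φ r)^2)) := by
    set F : ℝ → ENNReal := fun r => ENNReal.ofReal (r ^ p * (φ r)^2) with hFdef
    have hmeas : ∀ n : ℕ, AEMeasurable ((Ioc Λ (Λ + (n:ℝ))).indicator F) volume := by
      intro n
      rw [aemeasurable_indicator_iff measurableSet_Ioc]
      refine (ENNReal.continuous_ofReal.comp_continuousOn ?_).aemeasurable measurableSet_Ioc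
      exact ((hrpowc p).mul (hφc.pow 2)).mono (fun x hx => le_of_lt hx.1)
    have hmono : ∀ x, Monotone (fun n : ℕ => (Ioc Λ (Λ + (n:ℝ))).indicator F x) := by
      intro x m n hmn
      exact Set.indicator_le_indicator_of_subset
        (Ioc_subset_Ioc le_rfl (by have := (Nat.cast_le (α := ℝ)).mpr hmn; linarith))
        (fun _ => zero_le) x
    have hsup : ∀ x, (⨆ n : ℕ, (Ioc Λ (Λ + (n:ℝ))).indicator F x) = (Ioi Λ).indicator F x := by
      intro x
      by_cases hx : x ∈ Ioi Λ
      · obtain ⟨n, hn⟩ := exists_nat_ge (x - Λ)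
        rw [Set.indicator_of_mem hx]
        apply le_antisymm
        · refine iSup_le fun m => ?_
          have h1 := Set.indicator_le_indicator_of_subset
            (show Ioc Λ (Λ + (m:ℝ)) ⊆ Ioi Λ from fun y hy => hy.1)
            (show (0:ℝ → ENNReal) ≤ F from fun _ => zero_le) x
          rwa [Set.indicator_of_mem hx] at h1
        · refine le_iSup_of_le n ?_
          rw [Set.indicator_of_mem (show x ∈ Ioc Λ (Λ + (n:ℝ)) from ⟨hx, by linarith⟩)]
      · have h0 : ∀ n : ℕ, (Ioc Λ (Λ + (n:ℝ))).indicator F x = 0 := fun n =>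
          Set.indicator_of_notMem (fun h => hx h.1) F
        rw [Set.indicator_of_notMem hx]
        exact le_antisymm (iSup_le fun n => le_of_eq (h0 n)) zero_le
    calc ∫⁻ r in Ioi Λ, F r = ∫⁻ r, (Ioi Λ).indicator F r :=
          (lintegral_indicator measurableSet_Ioi F).symm
      _ = ∫⁻ r, ⨆ n : ℕ, (Ioc Λ (Λ + (n:ℝ))).indicator F r := by
          apply lintegral_congr; intro r; exact (hsup r).symm
      _ = ⨆ n : ℕ, ∫⁻ r, (Ioc Λ (Λ + (n:ℝ))).indicator F r :=
          lintegral_iSup' hmeas (ae_of_all _ hmono)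
      _ = ⨆ n : ℕ, ∫⁻ r in Ioc Λ (Λ + (n:ℝ)), F r := by
          refine iSup_congr fun n => lintegral_indicator measurableSet_Ioc F
  -- bound the weighted derivative integrals by the full lintegral
  have hgT : ∀ R, Λ ≤ R → ENNReal.ofReal (∫ r in Λ..R, r ^ p * (g r)^2)
      ≤ ∫⁻ r in Ioi Λ, ENNReal.ofReal (r ^ p * (deriv ψ r)^2) := by
    intro R hR
    rw [← hIoc_eq _ R hR (hcg2 R hR) (fun r hr => hnng2 r hr.1)]
    have hcg : ∫⁻ r in Ioc Λ R, ENNReal.ofReal (r ^ p * (g r)^2)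
        = ∫⁻ r in Ioc Λ R, ENNReal.ofReal (r ^ p * (deriv ψ r)^2) := by
      apply setLIntegral_congr_fun measurableSet_Ioc
      exact fun r hr => by simp only [hderiv_eq r hr.1]
    rw [hcg]
    exact lintegral_mono_set (fun x hx => hx.1)
  have hS : ∫⁻ r in Ioc Λ (2*Λ), ENNReal.ofReal ((φ r)^2)
      = ENNReal.ofReal (∫ r in Λ..(2*Λ), (φ r)^2) :=
    hIoc_eq _ (2*Λ) hΛ2 ((hφc.pow 2).mono Icc_subset_Ici_self) (fun _ _ => sq_nonneg _)
  -- final assembly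
  rw [hlim, ENNReal.mul_iSup]
  refine iSup_le fun n => ?_
  have hRn : Λ ≤ Λ + (n:ℝ) := le_add_of_nonneg_right (Nat.cast_nonneg n)
  have hARnn : (0:ℝ) ≤ ∫ r in Λ..(Λ + (n:ℝ)), r ^ p * (g r)^2 :=
    intervalIntegral.integral_nonneg hRn (fun u hu =>
      mul_nonneg (Real.rpow_nonneg (le_trans hΛ.le hu.1) _) (sq_nonneg _))
  have hKΛnn : (0:ℝ) ≤ 16*K*Λ*(1+Λ) := by positivity
  have hKcnn : (0:ℝ) ≤ 4*K*c := by positivity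
  rw [hIoc_eq _ (Λ + (n:ℝ)) hRn (hcφ2 _ hRn) (fun r hr => hnnφ2 r hr.1),
    ← ENNReal.ofReal_mul (by positivity : (0:ℝ) ≤ (1-p)^2)]
  calc ENNReal.ofReal ((1-p)^2 * ∫ r in Λ..(Λ + (n:ℝ)), r ^ p * (φ r)^2)
      ≤ ENNReal.ofReal (16*K*Λ*(1+Λ) * (∫ r in Λ..(2*Λ), (φ r)^2)
          + (4*K*c * (∫ r in Λ..(2*Λ), r ^ p * (g r)^2)
            + 4 * ∫ r in Λ..(Λ + (n:ℝ)), r ^ p * (g r)^2)) :=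
        ENNReal.ofReal_le_ofReal (hreal _ hRn)
    _ = ENNReal.ofReal (16*K*Λ*(1+Λ) * (∫ r in Λ..(2*Λ), (φ r)^2))
        + (ENNReal.ofReal (4*K*c * (∫ r in Λ..(2*Λ), r ^ p * (g r)^2))
          + ENNReal.ofReal (4 * ∫ r in Λ..(Λ + (n:ℝ)), r ^ p * (g r)^2)) := by
        rw [ENNReal.ofReal_add (mul_nonneg hKΛnn hIφ2nn)
            (add_nonneg (mul_nonneg hKcnn hIwg2nn) (by linarith)),
          ENNReal.ofReal_add (mul_nonneg hKcnn hIwg2nn) (by linarith)]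
    _ = ENNReal.ofReal (16*K*Λ*(1+Λ)) * ENNReal.ofReal (∫ r in Λ..(2*Λ), (φ r)^2)
        + (ENNReal.ofReal (4*K*c) * ENNReal.ofReal (∫ r in Λ..(2*Λ), r ^ p * (g r)^2)
          + ENNReal.ofReal 4 * ENNReal.ofReal (∫ r in Λ..(Λ + (n:ℝ)), r ^ p * (g r)^2)) := by
        rw [ENNReal.ofReal_mul hKΛnn, ENNReal.ofReal_mul hKcnn,
          ENNReal.ofReal_mul (by norm_num : (0:ℝ) ≤ 4)]
    _ ≤ ENNReal.ofReal (16*K*Λ*(1+Λ) + 4*K*c + 4)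
          * (∫⁻ r in Ioc Λ (2*Λ), ENNReal.ofReal ((φ r)^2))
        + (ENNReal.ofReal (4*K*c)
            * (∫⁻ r in Ioi Λ, ENNReal.ofReal (r ^ p * (deriv ψ r)^2))
          + ENNReal.ofReal 4
            * (∫⁻ r in Ioi Λ, ENNReal.ofReal (r ^ p * (deriv ψ r)^2))) := by
        refine add_le_add (mul_le_mul'
            (ENNReal.ofReal_le_ofReal (by nlinarith [mul_pos hK0 hc0])) (le_of_eq hS.symm))
          (add_le_add (mul_le_mul' le_rfl (hgT (2*Λ) hΛ2))
            (mul_le_mul' le_rfl (hgT _ hRn)))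
    _ = ENNReal.ofReal (16*K*Λ*(1+Λ) + 4*K*c + 4)
          * (∫⁻ r in Ioc Λ (2*Λ), ENNReal.ofReal ((φ r)^2))
        + ENNReal.ofReal (4*K*c + 4)
            * (∫⁻ r in Ioi Λ, ENNReal.ofReal (r ^ p * (deriv ψ r)^2)) := by
        rw [ENNReal.ofReal_add hKcnn (by norm_num : (0:ℝ) ≤ 4), add_mul]
    _ ≤ ENNReal.ofReal (16*K*Λ*(1+Λ) + 4*K*c + 4)
          * (∫⁻ r in Ioc Λ (2*Λ), ENNReal.ofReal ((φ r)^2))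
        + ENNReal.ofReal (16*K*Λ*(1+Λ) + 4*K*c + 4)
            * (∫⁻ r in Ioi Λ, ENNReal.ofReal (r ^ p * (deriv ψ r)^2)) := by
        refine add_le_add le_rfl (mul_le_mul'
          (ENNReal.ofReal_le_ofReal (by linarith)) le_rfl)
    _ = ENNReal.ofReal (16*K*Λ*(1+Λ) + 4*K*c + 4)
          * ((∫⁻ r in Ioi Λ, ENNReal.ofReal (r ^ p * (deriv ψ r)^2))
            + ∫⁻ r in Ioc Λ (2*Λ), ENNReal.ofReal ((φ r)^2)) := by
        ring
end

section
/- Let M > 0 and r₋₁ ∈ (M, 2M). There exists a constant C > 0, depending only on M and r₋₁, such that for every p ∈ [0, 2] and every C¹ function φ : (M, r₋₁] → ℝ, writing ψ(r) := r·φ(r), one has ∫_M^{r₋₁} (r − M)^{2−p} r^{−2} φ'(r)² dr ≤ C · ( ∫_M^{r₋₁} (r − M)^{2−p} r^{−2} ψ'(r)² dr + ∫_M^{r₋₁} (r − M)^{−p} r² φ(r)² dr ), where the inequality is understood in [0, ∞]. -/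
open Real Filter Set MeasureTheory

set_option maxHeartbeats 1000000 in
lemma aux_ineq (M r₁ r u F G : ℝ) (hM : 0 < M) (hr : M < r) (hr1 : r ≤ r₁)
    (hu : 0 ≤ u) :
    u * (r - M) ^ 2 * (r ^ 2)⁻¹ * ((G - F) / r) ^ 2 ≤
      (2 / M ^ 2 + 2 * (r₁ - M) ^ 2 / M ^ 6) *
        (u * (r - M) ^ 2 * (r ^ 2)⁻¹ * G ^ 2 + u * r ^ 2 * F ^ 2) := by
  have hr0 : 0 < r := hM.trans hr
  have hrM : 0 < r - M := by linarith
  have h1 : (G - F) ^ 2 ≤ 2 * G ^ 2 + 2 * F ^ 2 := by nlinarith [sq_nonneg (G + F)]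
  have key : u * (r - M) ^ 2 * (r ^ 2)⁻¹ * ((G - F) / r) ^ 2 =
      u * (r - M) ^ 2 * (G - F) ^ 2 / r ^ 4 := by
    rw [div_pow]; ring
  rw [key]
  have step1 : u * (r - M) ^ 2 * (G - F) ^ 2 / r ^ 4 ≤
      2 * u * (r - M) ^ 2 * G ^ 2 / r ^ 4 + 2 * u * (r - M) ^ 2 * F ^ 2 / r ^ 4 := by
    rw [← add_div]
    apply div_le_div_of_nonneg_right _ (by positivity)
    nlinarith [mul_nonneg hu (sq_nonneg (r - M))]
  have t1 : 2 * u * (r - M) ^ 2 * G ^ 2 / r ^ 4 ≤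
      2 / M ^ 2 * (u * (r - M) ^ 2 * (r ^ 2)⁻¹ * G ^ 2) := by
    have e : 2 / M ^ 2 * (u * (r - M) ^ 2 * (r ^ 2)⁻¹ * G ^ 2) =
        2 * u * (r - M) ^ 2 * G ^ 2 / (M ^ 2 * r ^ 2) := by
      field_simp
    rw [e]
    apply div_le_div_of_nonneg_left (by positivity) (by positivity)
    nlinarith [mul_le_mul_of_nonneg_right (show M ^ 2 ≤ r ^ 2 by nlinarith) (sq_nonneg r)]
  have t2 : 2 * u * (r - M) ^ 2 * F ^ 2 / r ^ 4 ≤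
      2 * (r₁ - M) ^ 2 / M ^ 6 * (u * r ^ 2 * F ^ 2) := by
    have e1 : 2 * u * (r - M) ^ 2 * F ^ 2 / r ^ 4 =
        (r - M) ^ 2 / r ^ 4 * (2 * u * F ^ 2) := by ring
    have e2 : 2 * (r₁ - M) ^ 2 / M ^ 6 * (u * r ^ 2 * F ^ 2) =
        (r₁ - M) ^ 2 * r ^ 2 / M ^ 6 * (2 * u * F ^ 2) := by ring
    rw [e1, e2]
    apply mul_le_mul_of_nonneg_right _ (by positivity)
    rw [div_le_div_iff₀ (by positivity) (by positivity)]
    have hA : (r - M) ^ 2 ≤ (r₁ - M) ^ 2 := by nlinarith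
    have hB : M ^ 6 ≤ r ^ 2 * r ^ 4 := by nlinarith [pow_le_pow_left₀ hM.le hr.le 6]
    calc (r - M) ^ 2 * M ^ 6 ≤ (r₁ - M) ^ 2 * (r ^ 2 * r ^ 4) :=
          mul_le_mul hA hB (by positivity) (by positivity)
      _ = (r₁ - M) ^ 2 * r ^ 2 * r ^ 4 := by ring
  have hA : 0 ≤ u * (r - M) ^ 2 * (r ^ 2)⁻¹ * G ^ 2 := by positivity
  have hB : 0 ≤ u * r ^ 2 * F ^ 2 := by positivity
  have hc1 : 0 ≤ 2 / M ^ 2 := by positivity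
  have hc2 : 0 ≤ 2 * (r₁ - M) ^ 2 / M ^ 6 := by positivity
  nlinarith [mul_nonneg hc1 hB, mul_nonneg hc2 hA]

/-- Near-horizon Hardy inequality controlling `(r-M)^{-p}|∂_u φ|²` by `(r-M)^{-p}|∂_u ψ|²`
plus the zeroth-order term (one-dimensional form of the second inequality of Lemma 4.1):
for `p ∈ [0, 2]` and `ψ = rφ`,
`∫_M^{r₋₁} (r-M)^{2-p} r^{-2} (φ')² dr ≤ C (∫_M^{r₋₁} (r-M)^{2-p} r^{-2} (ψ')² dr
  + ∫_M^{r₋₁} (r-M)^{-p} r² φ² dr)`. -/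
theorem stmt9 (M r₁ : ℝ) (hM : 0 < M) (h1 : M < r₁) (h2 : r₁ < 2 * M) :
    ∃ C : ℝ, 0 < C ∧ ∀ p : ℝ, p ∈ Set.Icc (0 : ℝ) 2 →
      ∀ φ : ℝ → ℝ, ContDiffOn ℝ 1 φ (Set.Ioc M r₁) →
        ∫⁻ r in Set.Ioc M r₁,
            ENNReal.ofReal ((r - M) ^ (2 - p) * r ^ (-2 : ℝ) * (deriv φ r) ^ 2) ≤
          ENNReal.ofReal C *
            ((∫⁻ r in Set.Ioc M r₁,
                ENNReal.ofReal
                  ((r - M) ^ (2 - p) * r ^ (-2 : ℝ) * (deriv (fun ρ => ρ * φ ρ) r) ^ 2)) +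
              ∫⁻ r in Set.Ioc M r₁,
                ENNReal.ofReal ((r - M) ^ (-p) * r ^ 2 * (φ r) ^ 2)) := by
  refine ⟨2 / M ^ 2 + 2 * (r₁ - M) ^ 2 / M ^ 6, by positivity, ?_⟩
  intro p hp φ hφ
  set C : ℝ := 2 / M ^ 2 + 2 * (r₁ - M) ^ 2 / M ^ 6 with hCdef
  have hC0 : 0 ≤ C := by positivity
  set fA : ℝ → ENNReal := fun r =>
    ENNReal.ofReal ((r - M) ^ (2 - p) * r ^ (-2 : ℝ) * (deriv (fun ρ => ρ * φ ρ) r) ^ 2)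
    with hfA
  set fB : ℝ → ENNReal := fun r =>
    ENNReal.ofReal ((r - M) ^ (-p) * r ^ 2 * (φ r) ^ 2) with hfB
  -- pointwise inequality
  have hpt : ∀ r ∈ Set.Ioc M r₁,
      ENNReal.ofReal ((r - M) ^ (2 - p) * r ^ (-2 : ℝ) * (deriv φ r) ^ 2) ≤
        ENNReal.ofReal C * (fA r + fB r) := by
    intro r hr
    have hr0 : 0 < r := hM.trans hr.1
    have hrM : 0 < r - M := by linarith [hr.1]
    have hA0 : 0 ≤ (r - M) ^ (2 - p) * r ^ (-2 : ℝ) * (deriv (fun ρ => ρ * φ ρ) r) ^ 2 := by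
      positivity
    have hB0 : 0 ≤ (r - M) ^ (-p) * r ^ 2 * (φ r) ^ 2 := by positivity
    rw [hfA, hfB, ← ENNReal.ofReal_add hA0 hB0, ← ENNReal.ofReal_mul hC0]
    apply ENNReal.ofReal_le_ofReal
    have e1 : (r - M) ^ (2 - p) = (r - M) ^ (-p) * (r - M) ^ 2 := by
      rw [show (2 : ℝ) - p = -p + 2 by ring, Real.rpow_add hrM,
        show ((2 : ℝ)) = ((2 : ℕ) : ℝ) by norm_num, Real.rpow_natCast]
    have e2 : r ^ (-2 : ℝ) = (r ^ 2)⁻¹ := by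
      rw [show ((-2 : ℝ)) = -((2 : ℕ) : ℝ) by norm_num, Real.rpow_neg hr0.le,
        Real.rpow_natCast]
    have hu : 0 ≤ (r - M) ^ (-p) := Real.rpow_nonneg hrM.le _
    rw [e1, e2]
    by_cases hd : DifferentiableAt ℝ φ r
    · have hder : deriv (fun ρ => ρ * φ ρ) r = φ r + r * deriv φ r := by
        rw [deriv_fun_mul differentiableAt_fun_id hd]; simp
      have hφ' : deriv φ r = ((deriv (fun ρ => ρ * φ ρ) r) - φ r) / r := by
        rw [hder]; field_simp; ring
      rw [hφ']
      exact aux_ineq M r₁ r ((r - M) ^ (-p)) (φ r) (deriv (fun ρ => ρ * φ ρ) r)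
        hM hr.1 hr.2 hu
    · rw [deriv_zero_of_not_differentiableAt hd]
      have hL : (r - M) ^ (-p) * (r - M) ^ 2 * (r ^ 2)⁻¹ * (0 : ℝ) ^ 2 = 0 := by ring
      rw [hL]
      positivity
  -- measurability of fB on the set
  have hφc : ContinuousOn φ (Set.Ioc M r₁) := hφ.continuousOn
  have hBc : ContinuousOn (fun r : ℝ => (r - M) ^ (-p) * r ^ 2 * (φ r) ^ 2)
      (Set.Ioc M r₁) := by
    apply ContinuousOn.mul
    · apply ContinuousOn.mul
      · exact (continuousOn_id.sub continuousOn_const).rpow_const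
          fun r hr => Or.inl (fun h => by change r - M = 0 at h; have := hr.1; have := sub_eq_zero.mp h; linarith)
      · exact (continuousOn_id.pow 2)
    · exact hφc.pow 2
  have hBm : AEMeasurable fB (volume.restrict (Set.Ioc M r₁)) :=
    ENNReal.measurable_ofReal.comp_aemeasurable
      (hBc.aemeasurable measurableSet_Ioc)
  calc ∫⁻ r in Set.Ioc M r₁,
        ENNReal.ofReal ((r - M) ^ (2 - p) * r ^ (-2 : ℝ) * (deriv φ r) ^ 2)
      ≤ ∫⁻ r in Set.Ioc M r₁, ENNReal.ofReal C * (fA r + fB r) := by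
        apply lintegral_mono_ae
        exact (ae_restrict_iff' measurableSet_Ioc).2 (ae_of_all _ hpt)
    _ = ENNReal.ofReal C * ∫⁻ r in Set.Ioc M r₁, (fA r + fB r) :=
        lintegral_const_mul' _ _ ENNReal.ofReal_ne_top
    _ = ENNReal.ofReal C *
        ((∫⁻ r in Set.Ioc M r₁, fA r) + ∫⁻ r in Set.Ioc M r₁, fB r) := by
        rw [lintegral_add_right' _ hBm]
end
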